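/- Characterization of trivially real completeness: every real FPUT polynomial is trivially real (i.e., the group $\mathcal{R}$ of real polynomials equals the group $\mathcal{T}$ of trivially real polynomials) if and only if $\phi(2N)/2 = N - \lceil N/2 \rceil$, and this holds if and only if $N$ is a power of $2$ or an odd prime. -/

import Mathlib

lemma phi2N_even_case (N : ℕ) (hN : 2 ≤ N) (he : 2 ∣ N) :
    ((2 * N).totient = N ↔ ∃ b, N = 2 ^ b) := by
  constructor
  · intro h
    set a := N.factorization 2 with ha
    have hm : 2 ^ a * (N / 2 ^ a) = N := Nat.ordProj_mul_ordCompl_eq_self N 2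
    set m := N / 2 ^ a with hmdef
    have hmodd : ¬ (2 ∣ m) := Nat.not_dvd_ordCompl Nat.prime_two (by omega)
    have ha1 : 1 ≤ a := (Nat.Prime.dvd_iff_one_le_factorization Nat.prime_two (by omega)).1 he
    have h2N : 2 * N = 2 ^ (a + 1) * m := by rw [← hm]; ring
    have hcop : Nat.Coprime (2 ^ (a + 1)) m := by
      apply Nat.Coprime.pow_left
      rw [Nat.prime_two.coprime_iff_not_dvd]
      exact hmodd
    have htot : (2 * N).totient = 2 ^ a * m.totient := by
      rw [h2N, Nat.totient_mul hcop, Nat.totient_prime_pow Nat.prime_two (by omega)]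
      simp only [Nat.add_sub_cancel]
      ring
    have hm1 : m = 1 := by
      by_contra hm1
      have hmpos : 0 < m := by
        rcases Nat.eq_zero_or_pos m with h0 | h0
        · rw [h0, mul_zero] at hm; omega
        · exact h0
      have : m.totient < m := Nat.totient_lt m (by omega)
      have h2 : 2 ^ a * m.totient < 2 ^ a * m :=
        (Nat.mul_lt_mul_left (by positivity : 0 < 2 ^ a)).2 this
      omega
    exact ⟨a, by rw [← hm, hm1, mul_one]⟩
  · rintro ⟨b, rfl⟩
    have hb : 1 ≤ b := by
      by_contra h
      interval_cases b <;> omega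
    have : 2 * 2 ^ b = 2 ^ (b + 1) := by ring
    rw [this, Nat.totient_prime_pow Nat.prime_two (by omega)]
    simp [pow_succ]

lemma nt_main (N : ℕ) (hN : 2 ≤ N) :
    (2 * N).totient / 2 = N - (N + 1) / 2 ↔ (∃ b : ℕ, N = 2 ^ b) ∨ (N.Prime ∧ Odd N) := by
  have heven : Even (2 * N).totient := Nat.totient_even (by omega)
  rw [Nat.even_iff] at heven
  rcases Nat.even_or_odd N with he | ho
  · rw [Nat.even_iff] at he
    have h1 : (2 * N).totient / 2 = N - (N + 1) / 2 ↔ (2 * N).totient = N := by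
      constructor <;> intro h <;> omega
    rw [h1, phi2N_even_case N hN ⟨N/2, by omega⟩]
    constructor
    · exact Or.inl
    · rintro (h | ⟨hp, hodd⟩)
      · exact h
      · rw [Nat.odd_iff] at hodd; omega
  · -- N odd
    have hN3 : 3 ≤ N := by rw [Nat.odd_iff] at ho; omega
    have hcop : Nat.Coprime 2 N := by
      rw [Nat.prime_two.coprime_iff_not_dvd, Nat.two_dvd_ne_zero, ← Nat.odd_iff]; exact ho
    have htot : (2 * N).totient = N.totient := by
      rw [Nat.totient_mul hcop, Nat.totient_two, one_mul]
    have hNe : Even N.totient := Nat.totient_even (by omega)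
    rw [Nat.even_iff] at hNe
    have hom := Nat.odd_iff.1 ho
    have h1 : (2 * N).totient / 2 = N - (N + 1) / 2 ↔ N.totient = N - 1 := by
      rw [htot]; constructor <;> intro h <;> omega
    rw [h1, Nat.totient_eq_iff_prime (by omega)]
    constructor
    · exact fun h => Or.inr ⟨h, ho⟩
    · rintro (⟨b, rfl⟩ | ⟨hp, _⟩)
      · rcases b with _ | b
        · omega
        · exfalso; rw [Nat.odd_iff] at ho; simp [pow_succ, Nat.mul_mod] at ho
      · exact hp

open Polynomial

lemma rel_zero {N : ℕ} (hN : 2 ≤ N) (hphi : N - 1 ≤ (2*N).totient) {ζ : ℂ}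
    (hζ : IsPrimitiveRoot ζ (2*N)) {g : ℤ[X]} (hdeg : g.natDegree ≤ N - 1)
    (h0 : g.coeff 0 = 0) (hg : aeval ζ g = 0) : g = 0 := by
  have hmin : Polynomial.cyclotomic (2*N) ℚ = minpoly ℚ ζ :=
    Polynomial.cyclotomic_eq_minpoly_rat hζ (by omega)
  set g' : ℚ[X] := g.map (algebraMap ℤ ℚ) with hg'def
  have hg'0 : aeval ζ g' = 0 := by rw [hg'def, aeval_map_algebraMap]; exact hg
  have hdvd : minpoly ℚ ζ ∣ g' := minpoly.dvd ℚ ζ hg'0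
  rw [← hmin] at hdvd
  obtain ⟨s, hs⟩ := hdvd
  have hcyc0 : Polynomial.cyclotomic (2*N) ℚ ≠ 0 := Polynomial.cyclotomic_ne_zero _ ℚ
  have hs0 : s = 0 := by
    by_contra hs0
    have hgne : g' ≠ 0 := by rw [hs]; exact mul_ne_zero hcyc0 hs0
    have hdegs : ((2*N).totient) + s.natDegree = g'.natDegree := by
      rw [hs, Polynomial.natDegree_mul hcyc0 hs0, Polynomial.natDegree_cyclotomic]
    have hdg' : g'.natDegree ≤ g.natDegree := Polynomial.natDegree_map_le
    have hsd : s.natDegree = 0 := by omega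
    have hsC : s = C (s.coeff 0) := Polynomial.eq_C_of_natDegree_le_zero (le_of_eq hsd)
    have he : g'.eval 0 = 0 := by
      rw [← Polynomial.coeff_zero_eq_eval_zero, hg'def, Polynomial.coeff_map, h0, map_zero]
    rw [hs, Polynomial.eval_mul, ← Polynomial.coeff_zero_eq_eval_zero,
      Polynomial.cyclotomic_coeff_zero ℚ (by omega), one_mul,
      ← Polynomial.coeff_zero_eq_eval_zero] at he
    rw [hsC, he, map_zero] at hs0
    exact hs0 rfl
  rw [hs0, mul_zero] at hs
  have : g = 0 := by
    have := Polynomial.map_injective (algebraMap ℤ ℚ)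
      (fun a b h => by exact_mod_cast h)
    apply this
    rw [← hg'def, hs, Polynomial.map_zero]
  exact this

lemma pow_inv_eq {N k : ℕ} {ζ : ℂ} (hζ0 : ζ ≠ 0) (hζN : ζ ^ N = -1) (hk : k ≤ N) :
    (ζ⁻¹) ^ k = -ζ ^ (N - k) := by
  have h : ζ ^ (N - k) * ζ ^ k = -1 := by
    rw [← pow_add]; rw [Nat.sub_add_cancel hk]; exact hζN
  rw [inv_pow]
  exact inv_eq_of_mul_eq_one_left (by rw [neg_mul, h, neg_neg])

lemma real_to_trivial {N : ℕ} (hN : 2 ≤ N) (hphi : N - 1 ≤ (2*N).totient) {ζ : ℂ}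
    (hζ : IsPrimitiveRoot ζ (2*N)) (hζ0 : ζ ≠ 0) (hζN : ζ ^ N = -1)
    (hconj : (starRingEnd ℂ) ζ = ζ⁻¹) {p : ℤ[X]}
    (hdeg : p.natDegree < N) (hr : ∃ r : ℝ, aeval ζ p = (r : ℂ)) :
    ∃ lam : ℕ → ℤ, p = C (lam 0) +
      ∑ k ∈ Finset.Icc 1 ((N - 1) / 2), C (lam k) * (X ^ k - X ^ (N - k)) := by
  -- realness as conjugation invariance
  have hre : (starRingEnd ℂ) (aeval ζ p) = aeval ζ p := by
    obtain ⟨r, hr⟩ := hr; rw [hr, Complex.conj_ofReal]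
  -- sum expansion
  have hsum : aeval ζ p = ∑ i ∈ Finset.range N, (p.coeff i : ℂ) * ζ ^ i := by
    rw [Polynomial.aeval_eq_sum_range' hdeg]
    refine Finset.sum_congr rfl fun i _ => ?_
    rw [zsmul_eq_mul]
  have hconjsum : (starRingEnd ℂ) (aeval ζ p)
      = ∑ i ∈ Finset.range N, (p.coeff i : ℂ) * (ζ⁻¹) ^ i := by
    rw [hsum, map_sum]
    exact Finset.sum_congr rfl fun i _ => by
      rw [map_mul, map_pow, hconj, map_intCast]
  -- the relation polynomial
  set g : ℤ[X] := ∑ k ∈ Finset.Icc 1 (N-1), C (p.coeff k + p.coeff (N - k)) * X ^ k with hgdef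
  have hgeval : aeval ζ g = aeval ζ p - (starRingEnd ℂ) (aeval ζ p) := by
    have hins : Finset.range N = insert 0 (Finset.Icc 1 (N-1)) := by
      ext x; simp only [Finset.mem_range, Finset.mem_insert, Finset.mem_Icc]; omega
    have h0nm : (0:ℕ) ∉ Finset.Icc 1 (N-1) := by simp
    rw [hgdef, map_sum, hconjsum, hsum, hins, Finset.sum_insert h0nm, Finset.sum_insert h0nm]
    have h1 : ∀ k ∈ Finset.Icc 1 (N-1),
        aeval ζ (C (p.coeff k + p.coeff (N - k)) * X ^ k)
          = (p.coeff k : ℂ) * ζ ^ k + (p.coeff (N - k) : ℂ) * ζ ^ k := by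
      intro k hk
      simp only [map_mul, map_add, map_intCast, aeval_C, map_pow, aeval_X, eq_intCast]
      push_cast
      ring
    rw [Finset.sum_congr rfl h1, Finset.sum_add_distrib]
    have h2 : ∑ k ∈ Finset.Icc 1 (N-1), (p.coeff (N - k) : ℂ) * ζ ^ k
        = ∑ k ∈ Finset.Icc 1 (N-1), (p.coeff k : ℂ) * ζ ^ (N - k) := by
      apply Finset.sum_nbij' (fun k => N - k) (fun k => N - k)
        <;> intro a ha <;> simp only [Finset.mem_Icc] at * <;> try omega
      rw [Nat.sub_sub_self (by omega)]
    have h3 : ∀ k ∈ Finset.Icc 1 (N-1), (p.coeff k : ℂ) * ζ ^ (N - k)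
        = -((p.coeff k : ℂ) * (ζ⁻¹) ^ k) := by
      intro k hk
      simp only [Finset.mem_Icc] at hk
      rw [pow_inv_eq hζ0 hζN (by omega)]
      ring
    rw [h2, Finset.sum_congr rfl h3, Finset.sum_neg_distrib]
    simp only [pow_zero, mul_one, inv_pow]
    ring
  have hg0 : aeval ζ g = 0 := by rw [hgeval, hre, sub_self]
  have hgdeg : g.natDegree ≤ N - 1 := by
    apply Polynomial.natDegree_sum_le_of_forall_le
    intro k hk
    simp only [Finset.mem_Icc] at hk
    exact le_trans (Polynomial.natDegree_C_mul_le _ _)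
      (by rw [Polynomial.natDegree_X_pow]; omega)
  have hgc0 : g.coeff 0 = 0 := by
    rw [hgdef, Polynomial.finset_sum_coeff]
    apply Finset.sum_eq_zero
    intro k hk
    simp only [Finset.mem_Icc] at hk
    rw [Polynomial.coeff_C_mul, Polynomial.coeff_X_pow, if_neg (by omega), mul_zero]
  have hgz : g = 0 := rel_zero hN hphi hζ hgdeg hgc0 hg0
  have hc : ∀ k, 1 ≤ k → k ≤ N - 1 → p.coeff k + p.coeff (N - k) = 0 := by
    intro k h1 h2
    have hck : g.coeff k = 0 := by rw [hgz]; simp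
    rw [hgdef, Polynomial.finset_sum_coeff] at hck
    rw [Finset.sum_eq_single k ?_ ?_] at hck
    · rwa [Polynomial.coeff_C_mul, Polynomial.coeff_X_pow, if_pos rfl, mul_one] at hck
    · intro b _ hbk
      rw [Polynomial.coeff_C_mul, Polynomial.coeff_X_pow, if_neg (fun h => hbk h.symm), mul_zero]
    · intro hkn
      exact absurd (Finset.mem_Icc.2 ⟨h1, h2⟩) hkn
  refine ⟨fun k => p.coeff k, ?_⟩
  ext j
  rw [Polynomial.coeff_add, Polynomial.coeff_C, Polynomial.finset_sum_coeff]
  have hterm : ∀ k ∈ Finset.Icc 1 ((N-1)/2),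
      (C (p.coeff k) * (X ^ k - X ^ (N - k))).coeff j
        = p.coeff k * ((if j = k then 1 else 0) - (if j = N - k then 1 else 0)) := by
    intro k _
    rw [Polynomial.coeff_C_mul, Polynomial.coeff_sub, Polynomial.coeff_X_pow,
      Polynomial.coeff_X_pow]
  rw [Finset.sum_congr rfl hterm]
  by_cases hj0 : j = 0
  · subst hj0
    rw [if_pos rfl, Finset.sum_eq_zero, add_zero]
    intro k hk
    simp only [Finset.mem_Icc] at hk
    rw [if_neg (by omega), if_neg (by omega)]
    ring
  rw [if_neg hj0, zero_add]
  by_cases hjlt : j < N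
  · by_cases hjle : j ≤ (N-1)/2
    · rw [Finset.sum_eq_single j ?_ ?_]
      · rw [if_pos rfl, if_neg (by omega)]; ring
      · intro b hb hbj
        simp only [Finset.mem_Icc] at hb
        rw [if_neg (fun h => hbj h.symm), if_neg (by omega)]
        ring
      · intro hjn
        exact absurd (Finset.mem_Icc.2 ⟨by omega, hjle⟩) hjn
    · by_cases hNj : N - j ≤ (N-1)/2
      · rw [Finset.sum_eq_single (N - j) ?_ ?_]
        · rw [if_neg (by omega), if_pos (by omega)]
          have := hc (N - j) (by omega) (by omega)
          rw [Nat.sub_sub_self (by omega : j ≤ N)] at this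
          omega
        · intro b hb hbj
          simp only [Finset.mem_Icc] at hb
          rw [if_neg (by omega), if_neg (by omega)]
          ring
        · intro hjn
          exact absurd (Finset.mem_Icc.2 ⟨by omega, hNj⟩) hjn
      · have hj2 : 2 * j = N := by omega
        rw [Finset.sum_eq_zero ?_]
        · have := hc j (by omega) (by omega)
          have hNjj : N - j = j := by omega
          rw [hNjj] at this
          omega
        · intro k hk
          simp only [Finset.mem_Icc] at hk
          rw [if_neg (by omega), if_neg (by omega)]
          ring
  · rw [Polynomial.coeff_eq_zero_of_natDegree_lt (by omega), Finset.sum_eq_zero ?_]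
    intro k hk
    simp only [Finset.mem_Icc] at hk
    rw [if_neg (by omega), if_neg (by omega)]
    ring

lemma trivial_mem {N : ℕ} (hN : 2 ≤ N) {ζ : ℂ} (hζ0 : ζ ≠ 0) (hζN : ζ ^ N = -1)
    (hconj : (starRingEnd ℂ) ζ = ζ⁻¹) (lam : ℕ → ℤ) :
    (C (lam 0) + ∑ k ∈ Finset.Icc 1 ((N-1)/2),
        C (lam k) * (X ^ k - X ^ (N - k)) : ℤ[X]).natDegree < N ∧
    ∃ r : ℝ, aeval ζ (C (lam 0) + ∑ k ∈ Finset.Icc 1 ((N-1)/2),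
        C (lam k) * (X ^ k - X ^ (N - k)) : ℤ[X]) = (r : ℂ) := by
  constructor
  · apply Nat.lt_of_le_of_lt (Polynomial.natDegree_add_le _ _)
    apply max_lt
    · rw [Polynomial.natDegree_C]; omega
    · have hb : ∀ k ∈ Finset.Icc 1 ((N-1)/2),
          (C (lam k) * (X ^ k - X ^ (N - k)) : ℤ[X]).natDegree ≤ N - 1 := by
        intro k hk
        simp only [Finset.mem_Icc] at hk
        refine le_trans (Polynomial.natDegree_C_mul_le _ _)
          (le_trans (Polynomial.natDegree_sub_le _ _) ?_)
        rw [Polynomial.natDegree_X_pow, Polynomial.natDegree_X_pow]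
        omega
      exact Nat.lt_of_le_of_lt (Polynomial.natDegree_sum_le_of_forall_le _ _ hb) (by omega)
  · rw [← Complex.conj_eq_iff_real]
    simp only [map_add, map_sum, map_mul, map_sub, map_pow, aeval_C, aeval_X, eq_intCast,
      map_intCast]
    congr 1
    apply Finset.sum_congr rfl
    intro k hk
    simp only [Finset.mem_Icc] at hk
    rw [hconj, pow_inv_eq hζ0 hζN (by omega), pow_inv_eq hζ0 hζN (by omega : N - k ≤ N),
      Nat.sub_sub_self (by omega : k ≤ N)]
    ring

lemma exists_decomp {N : ℕ} (hN : 2 ≤ N) (hnot : ¬((∃ b : ℕ, N = 2 ^ b) ∨ (N.Prime ∧ Odd N))) :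
    ∃ m q : ℕ, m.Prime ∧ Odd m ∧ 2 ≤ q ∧ N = m * q := by
  have key : ∃ m, m.Prime ∧ Odd m ∧ m ∣ N := by
    rcases Nat.even_or_odd N with he | ho
    · have hnp : ¬ ∃ b, N = 2 ^ b := fun h => hnot (Or.inl h)
      set a := N.factorization 2 with ha
      set M := N / 2 ^ a with hMdef
      have hm : 2 ^ a * M = N := Nat.ordProj_mul_ordCompl_eq_self N 2
      have hmodd : ¬ (2 ∣ M) := Nat.not_dvd_ordCompl Nat.prime_two (by omega)
      have hM1 : M ≠ 1 := fun h1 => hnp ⟨a, by rw [← hm, h1, mul_one]⟩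
      have hM2 : 2 ≤ M := by
        rcases Nat.eq_zero_or_pos M with h | h
        · rw [h, mul_zero] at hm; omega
        · omega
      have hmp : M.minFac.Prime := Nat.minFac_prime (by omega)
      have hmdM : M.minFac ∣ M := Nat.minFac_dvd M
      refine ⟨M.minFac, hmp, ?_, hmdM.trans ⟨2 ^ a, by rw [← hm]; ring⟩⟩
      rcases Nat.even_or_odd M.minFac with hev | hod
      · exfalso
        exact hmodd ((even_iff_two_dvd.mp hev).trans hmdM)
      · exact hod
    · have hnp : ¬ N.Prime := fun hp => hnot (Or.inr ⟨hp, ho⟩)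
      have hmp : N.minFac.Prime := Nat.minFac_prime (by omega)
      have hmdN : N.minFac ∣ N := Nat.minFac_dvd N
      refine ⟨N.minFac, hmp, ?_, hmdN⟩
      rcases Nat.even_or_odd N.minFac with hev | hod
      · exact absurd ((even_iff_two_dvd.mp hev).trans hmdN)
          (by rw [Nat.two_dvd_ne_zero, ← Nat.odd_iff]; exact ho)
      · exact hod
  obtain ⟨m, hmp, hmo, hmd⟩ := key
  refine ⟨m, N / m, hmp, hmo, ?_, (Nat.mul_div_cancel' hmd).symm⟩
  have h0 : m * (N / m) = N := Nat.mul_div_cancel' hmd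
  have hq1 : N / m ≠ 1 := by
    intro h1
    rw [h1, mul_one] at h0
    rcases Nat.even_or_odd N with he | ho
    · rw [Nat.even_iff] at he; rw [Nat.odd_iff] at hmo; omega
    · exact (fun hp => hnot (Or.inr ⟨hp, ho⟩)) (h0 ▸ hmp)
  have hq0 : N / m ≠ 0 := by
    intro h1; rw [h1, mul_zero] at h0; omega
  exact (by omega : ∀ q : ℕ, q ≠ 0 → q ≠ 1 → 2 ≤ q) _ hq0 hq1

lemma witness_lemma {N : ℕ} (hN : 2 ≤ N)
    (hnot : ¬((∃ b : ℕ, N = 2 ^ b) ∨ (N.Prime ∧ Odd N))) {ζ : ℂ}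
    (hζ : IsPrimitiveRoot ζ (2 * N)) (hζN : ζ ^ N = -1) :
    ∃ p : ℤ[X], (p.natDegree < N ∧ ∃ r : ℝ, aeval ζ p = (r : ℂ)) ∧
      ¬ ∃ lam : ℕ → ℤ, p = C (lam 0) +
        ∑ k ∈ Finset.Icc 1 ((N - 1) / 2), C (lam k) * (X ^ k - X ^ (N - k)) := by
  obtain ⟨m, q, hmp, hmo, hq2, hNmq⟩ := exists_decomp hN hnot
  have hm3 : 3 ≤ m := by
    have h2 := hmp.two_le
    rw [Nat.odd_iff] at hmo
    omega
  have hqm : q * m = N := by rw [hNmq]; ring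
  have hqmN : q * (m - 1) + q = N := by
    obtain ⟨n, rfl⟩ : ∃ n, m = n + 1 := ⟨m - 1, by omega⟩
    simp only [Nat.add_sub_cancel, Nat.mul_succ] at hqm ⊢
    omega
  have hN6 : 6 ≤ N := by
    have := Nat.mul_le_mul (le_refl q) hm3
    have h2 : q * 3 ≥ 2 * 3 := by omega
    omega
  set p : ℤ[X] := ∑ j ∈ Finset.range m, C ((-1)^j : ℤ) * X ^ (q*j+1) with hpdef
  have hcoeff : ∀ t : ℕ, p.coeff t
      = ∑ j ∈ Finset.range m, (-1)^j * (if t = q*j+1 then 1 else 0) := by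
    intro t
    rw [hpdef, Polynomial.finset_sum_coeff]
    exact Finset.sum_congr rfl fun j _ => by
      rw [Polynomial.coeff_C_mul, Polynomial.coeff_X_pow]
  have hc1 : p.coeff 1 = 1 := by
    rw [hcoeff, Finset.sum_eq_single 0 ?_ ?_]
    · simp
    · intro b hb hb0
      rw [if_neg, mul_zero]
      intro h
      exact hb0 ((Nat.mul_eq_zero.mp (by omega : q * b = 0)).resolve_left (by omega))
    · intro h
      exact absurd (Finset.mem_range.2 (by omega)) h
  have hcN : p.coeff (N-1) = 0 ∨ p.coeff (N-1) = 1 := by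
    by_cases hq2' : q = 2
    · right
      rw [hcoeff, Finset.sum_eq_single (m-1) ?_ ?_]
      · rw [if_pos (by omega), mul_one]
        exact Even.neg_one_pow (Nat.Odd.sub_odd hmo odd_one)
      · intro b hb hbm
        simp only [Finset.mem_range] at hb
        rw [if_neg (by subst hq2'; omega), mul_zero]
      · intro h
        exact absurd (Finset.mem_range.2 (by omega)) h
    · left
      rw [hcoeff]
      apply Finset.sum_eq_zero
      intro j hj
      simp only [Finset.mem_range] at hj
      rw [if_neg, mul_zero]
      intro h
      have hsplit : q * m = q * j + q * (m - j) := by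
        rw [← Nat.mul_add, Nat.add_sub_cancel' hj.le]
      have hqd : q * (m - j) = 2 := by omega
      have : q ≤ 2 := Nat.le_of_dvd (by norm_num) ⟨m - j, hqd.symm⟩
      omega
  refine ⟨p, ⟨?_, ?_⟩, ?_⟩
  · -- degree bound
    apply Nat.lt_of_le_of_lt (Polynomial.natDegree_sum_le_of_forall_le _ _ ?_)
      (by omega : N - 1 < N)
    intro j hj
    simp only [Finset.mem_range] at hj
    refine le_trans (Polynomial.natDegree_C_mul_le _ _) ?_
    rw [Polynomial.natDegree_X_pow]
    have : q * j ≤ q * (m - 1) := Nat.mul_le_mul_left q (by omega)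
    omega
  · -- evaluates to 0
    refine ⟨0, ?_⟩
    push_cast
    rw [hpdef, map_sum]
    have h1 : ∀ j ∈ Finset.range m, aeval ζ (C ((-1)^j : ℤ) * X ^ (q*j+1))
        = ζ * (-ζ^q)^j := by
      intro j _
      simp only [map_mul, aeval_C, map_pow, map_neg, map_one, aeval_X, eq_intCast]
      conv_rhs => rw [neg_pow, ← pow_mul]
      push_cast
      ring
    rw [Finset.sum_congr rfl h1, ← Finset.mul_sum]
    have hx1 : (-ζ^q) ≠ 1 := by
      intro h
      have hz2 : ζ ^ (q * 2) = 1 := by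
        rw [pow_mul]
        have : ζ^q = -1 := by linear_combination -h
        rw [this]; norm_num
      have hdvd : 2 * N ∣ q * 2 := hζ.dvd_of_pow_eq_one _ hz2
      have hle : 2 * N ≤ q * 2 := Nat.le_of_dvd (by omega) hdvd
      have : 3 * q ≤ m * q := Nat.mul_le_mul_right q hm3
      omega
    rw [geom_sum_eq hx1]
    have hxm : (-ζ^q)^m = 1 := by
      rw [neg_pow, ← pow_mul, hqm, hζN, Odd.neg_one_pow hmo]
      ring
    rw [hxm, sub_self, zero_div, mul_zero]
  · -- not trivially real
    rintro ⟨lam, heq⟩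
    have hmem1 : (1:ℕ) ∈ Finset.Icc 1 ((N-1)/2) := Finset.mem_Icc.2 (by omega)
    have hterm : ∀ t : ℕ, ∀ k ∈ Finset.Icc 1 ((N-1)/2),
        (C (lam k) * (X ^ k - X ^ (N - k))).coeff t
          = lam k * ((if t = k then 1 else 0) - (if t = N - k then 1 else 0)) := by
      intro t k _
      rw [Polynomial.coeff_C_mul, Polynomial.coeff_sub, Polynomial.coeff_X_pow,
        Polynomial.coeff_X_pow]
    have e1 : p.coeff 1 = lam 1 := by
      rw [heq, Polynomial.coeff_add, Polynomial.coeff_C, if_neg one_ne_zero,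
        Polynomial.finset_sum_coeff, Finset.sum_congr rfl (hterm 1), zero_add,
        Finset.sum_eq_single 1 ?_ ?_]
      · rw [if_pos rfl, if_neg (by omega)]; ring
      · intro b hb hb1
        simp only [Finset.mem_Icc] at hb
        rw [if_neg (by omega), if_neg (by omega)]; ring
      · intro h; exact absurd hmem1 h
    have e2 : p.coeff (N-1) = -lam 1 := by
      rw [heq, Polynomial.coeff_add, Polynomial.coeff_C, if_neg (by omega),
        Polynomial.finset_sum_coeff, Finset.sum_congr rfl (hterm (N-1)), zero_add,
        Finset.sum_eq_single 1 ?_ ?_]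
      · rw [if_neg (by omega), if_pos (by omega)]; ring
      · intro b hb hb1
        simp only [Finset.mem_Icc] at hb
        rw [if_neg (by omega), if_neg (by omega)]; ring
      · intro h; exact absurd hmem1 h
    rw [hc1] at e1
    rw [e2, ← e1] at hcN
    omega

open Polynomial in
/-- Every real FPUT polynomial is trivially real iff `φ(2N)/2 = N - ⌈N/2⌉`,
which holds iff `N` is a power of `2` or an odd prime. -/
theorem trivially_real_complete_iff (N : ℕ) (hN : 2 ≤ N) (ζ : ℂ)
    (hζ : ζ = Complex.exp (Real.pi * Complex.I / N)) :
    ({p : ℤ[X] | p.natDegree < N ∧ ∃ r : ℝ, Polynomial.aeval ζ p = (r : ℂ)} =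
      {p : ℤ[X] | ∃ lam : ℕ → ℤ,
        p = C (lam 0) + ∑ k ∈ Finset.Icc 1 ((N - 1) / 2), C (lam k) * (X ^ k - X ^ (N - k))}
      ↔ (2 * N).totient / 2 = N - (N + 1) / 2) ∧
    ((2 * N).totient / 2 = N - (N + 1) / 2 ↔
      (∃ b : ℕ, N = 2 ^ b) ∨ (N.Prime ∧ Odd N)) := by
  have hNC : (N : ℂ) ≠ 0 := Nat.cast_ne_zero.2 (by omega)
  have hprim : IsPrimitiveRoot ζ (2 * N) := by
    have h := Complex.isPrimitiveRoot_exp (2 * N) (by omega)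
    have heq : Complex.exp (2 * Real.pi * Complex.I / (2 * N : ℕ)) = ζ := by
      rw [hζ]
      congr 1
      push_cast
      field_simp
    rwa [heq] at h
  have hζ0 : ζ ≠ 0 := by rw [hζ]; exact Complex.exp_ne_zero _
  have hζN : ζ ^ N = -1 := by
    rw [hζ, ← Complex.exp_nat_mul]
    have h : (N : ℂ) * (Real.pi * Complex.I / N) = Real.pi * Complex.I := by
      field_simp
    rw [h, Complex.exp_pi_mul_I]
  have hconj : (starRingEnd ℂ) ζ = ζ⁻¹ := by
    rw [hζ, ← Complex.exp_conj, ← Complex.exp_neg]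
    congr 1
    simp only [map_div₀, map_mul, Complex.conj_ofReal, Complex.conj_I, map_natCast]
    ring
  refine ⟨?_, nt_main N hN⟩
  rw [nt_main N hN]
  constructor
  · intro hset
    by_contra hnot
    obtain ⟨p, hmem, hnmem⟩ := witness_lemma hN hnot hprim hζN
    rw [Set.ext_iff] at hset
    exact hnmem ((hset p).mp hmem)
  · intro hP
    have hphi : N - 1 ≤ (2 * N).totient := by
      have h1 := (nt_main N hN).mpr hP
      have h2 : Even (2 * N).totient := Nat.totient_even (by omega)
      rw [Nat.even_iff] at h2
      omega
    ext p
    simp only [Set.mem_setOf_eq]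
    constructor
    · rintro ⟨hdeg, hr⟩
      exact real_to_trivial hN hphi hprim hζ0 hζN hconj hdeg hr
    · rintro ⟨lam, rfl⟩
      exact trivial_mem hN hζ0 hζN hconj lam
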